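/- Let p be an odd prime, χ_p the real character mod p, and for a positive integer n write n* = n / p^{ord_p(n)}. Then ∑_{d | n} ((pn/d) − d) χ_p(d) = (pn − n* χ_p(n*)) ∑_{d | n*} χ_p(d)/d, and moreover (pn − n*) φ(n*)/n* ≥ (p−1) φ(n). -/

import Mathlib

theorem eisenstein_sum_identity (p : ℕ) [Fact p.Prime] (hodd : Odd p)
    (n : ℕ) (hn : 0 < n) :
    (∑ d ∈ n.divisors, (((p : ℚ) * n / d) - d) * legendreSym p d =
      ((p : ℚ) * n - (n / p ^ (n.factorization p) : ℕ) *
          legendreSym p (n / p ^ (n.factorization p))) *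
        ∑ d ∈ (n / p ^ (n.factorization p)).divisors, (legendreSym p d : ℚ) / d) ∧
    ((p : ℚ) - 1) * Nat.totient n ≤
      ((p : ℚ) * n - (n / p ^ (n.factorization p) : ℕ)) *
        Nat.totient (n / p ^ (n.factorization p)) / (n / p ^ (n.factorization p) : ℕ) := by
  have hp : p.Prime := Fact.out
  set k := n.factorization p with hk
  set m := n / p ^ k with hmdef
  have hmn : m ∣ n := Nat.ordCompl_dvd n p
  have hm0 : 0 < m := Nat.ordCompl_pos p hn.ne'
  have hpm : ¬ p ∣ m := Nat.not_dvd_ordCompl hp hn.ne'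
  have hnm : p ^ k * m = n := Nat.ordProj_mul_ordCompl_eq_self n p
  have hchi0 : ∀ d : ℕ, p ∣ d → legendreSym p d = 0 := by
    intro d hd
    rw [legendreSym.eq_zero_iff]
    exact_mod_cast (ZMod.natCast_eq_zero_iff d p).mpr hd
  have hchine : ∀ d : ℕ, ¬ p ∣ d → ((d : ℤ) : ZMod p) ≠ 0 := by
    intro d hd h
    exact hd ((ZMod.natCast_eq_zero_iff d p).mp (by exact_mod_cast h))
  have hcast : ((n : ℤ) / (p : ℤ) ^ k) = (m : ℤ) := by
    rw [← Nat.cast_pow]; exact (Int.natCast_ediv n (p ^ k)).symm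
  constructor
  · -- first identity
    simp only [hcast]
    have hsub : m.divisors ⊆ n.divisors := Nat.divisors_subset_of_dvd hn.ne' hmn
    have hstep : ∑ d ∈ n.divisors, (((p : ℚ) * n / d) - d) * legendreSym p d
        = ∑ d ∈ m.divisors, (((p : ℚ) * n / d) - d) * legendreSym p d := by
      refine (Finset.sum_subset hsub ?_).symm
      intro d hd hdm
      have hdn : d ∣ n := (Nat.mem_divisors.mp hd).1
      have hpd : p ∣ d := by
        by_contra hpd
        refine hdm (Nat.mem_divisors.mpr ⟨?_, hm0.ne'⟩)
        have hcop : Nat.Coprime d (p ^ k) :=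
          Nat.Coprime.pow_right k ((hp.coprime_iff_not_dvd.mpr hpd).symm)
        exact hcop.dvd_of_dvd_mul_left (hnm ▸ hdn)
      rw [hchi0 d hpd]
      simp
    rw [hstep, Finset.mul_sum]
    have key : ∀ d ∈ m.divisors,
        ((p : ℚ) * n - m * legendreSym p m) * ((legendreSym p d : ℚ) / d)
          = (p : ℚ) * n / d * legendreSym p d
            - ((m / d : ℕ) : ℚ) * legendreSym p ((m / d : ℕ)) := by
      intro d hd
      have hdm : d ∣ m := (Nat.mem_divisors.mp hd).1
      have hd0 : d ≠ 0 := (Nat.pos_of_mem_divisors hd).ne'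
      have hd0' : (d : ℚ) ≠ 0 := Nat.cast_ne_zero.mpr hd0
      have hpd : ¬ p ∣ d := fun h => hpm (h.trans hdm)
      have hme : m = d * (m / d) := (Nat.mul_div_cancel' hdm).symm
      have hmul : legendreSym p m = legendreSym p d * legendreSym p (m / d : ℕ) := by
        rw [show ((m : ℤ)) = (d : ℤ) * ((m / d : ℕ) : ℤ) by exact_mod_cast hme]
        exact legendreSym.mul p _ _
      have hsq : (legendreSym p d : ℚ) * legendreSym p d = 1 := by
        have h := legendreSym.sq_one p (hchine d hpd)
        rw [sq] at h
        exact_mod_cast h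
      have hmq : (m : ℚ) = (d : ℚ) * ((m / d : ℕ) : ℚ) := by exact_mod_cast hme
      rw [hmq, show ((legendreSym p m : ℤ) : ℚ)
          = (legendreSym p d : ℚ) * (legendreSym p (m / d : ℕ) : ℚ) by exact_mod_cast hmul]
      have expand : ((p : ℚ) * n
            - (d : ℚ) * ((m / d : ℕ) : ℚ) * ((legendreSym p d : ℚ) * (legendreSym p (m / d : ℕ) : ℚ)))
            * ((legendreSym p d : ℚ) / d)
          = (p : ℚ) * n / d * legendreSym p d
            - ((m / d : ℕ) : ℚ) * (legendreSym p (m / d : ℕ) : ℚ)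
              * ((legendreSym p d : ℚ) * legendreSym p d) * ((d : ℚ) / d) := by
        ring
      rw [expand, hsq, div_self hd0', mul_one, mul_one]
    rw [Finset.sum_congr rfl key, Finset.sum_sub_distrib]
    have hre : ∑ d ∈ m.divisors, ((m / d : ℕ) : ℚ) * legendreSym p ((m / d : ℕ))
        = ∑ d ∈ m.divisors, (d : ℚ) * legendreSym p d :=
      Nat.sum_div_divisors m (fun d => (d : ℚ) * legendreSym p d)
    rw [hre]
    rw [← Finset.sum_sub_distrib]
    apply Finset.sum_congr rfl
    intro d hd
    ring
  · -- inequality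
    have hm0' : (m : ℚ) ≠ 0 := Nat.cast_ne_zero.mpr hm0.ne'
    rcases Nat.eq_zero_or_pos k with hk0 | hkpos
    · have hmn' : m = n := by rw [hmdef, hk0, pow_zero, Nat.div_one]
      have hn0 : (n : ℚ) ≠ 0 := Nat.cast_ne_zero.mpr hn.ne'
      rw [hmn']
      apply le_of_eq
      field_simp
    · obtain ⟨j, hj⟩ : ∃ j, k = j + 1 := ⟨k - 1, (Nat.succ_pred_eq_of_pos hkpos).symm⟩
      have hφ : (n.totient : ℚ) = (p : ℚ) ^ j * ((p : ℚ) - 1) * m.totient := by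
        have h1 : n.totient = (p ^ k).totient * m.totient := by
          rw [← hnm]
          exact Nat.totient_mul (Nat.Coprime.pow_left _ (hp.coprime_iff_not_dvd.mpr hpm))
        have h2 : (p ^ k).totient = p ^ (k - 1) * (p - 1) :=
          Nat.totient_prime_pow hp hkpos
        rw [h1, h2, hj]
        simp only [Nat.add_sub_cancel]
        push_cast [Nat.cast_sub hp.one_lt.le]
        ring
      have hnq : (n : ℚ) = (p : ℚ) ^ k * m := by exact_mod_cast hnm.symm
      have hrhs : ((p : ℚ) * n - m) * m.totient / m = ((p : ℚ) ^ (k + 1) - 1) * m.totient := by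
        rw [hnq]
        field_simp
        ring
      rw [hrhs, hφ]
      have hp3 : (3 : ℚ) ≤ p := by
        have h2 := hp.two_le
        have ho := Nat.odd_iff.mp hodd
        have : 3 ≤ p := by omega
        exact_mod_cast this
      have hpj : (1 : ℚ) ≤ (p : ℚ) ^ j := one_le_pow₀ (by linarith)
      have hφ0 : (0 : ℚ) ≤ m.totient := Nat.cast_nonneg _
      rw [hj]
      have hpow : (p : ℚ) ^ (j + 1 + 1) = (p : ℚ) ^ j * p * p := by ring
      rw [hpow]
      nlinarith [hpj, hp3, hφ0, mul_le_mul_of_nonneg_right hpj hφ0]
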